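/- If the relaxed dual SDP constraints hold for Λ (i.e. for each j there exist r^{(j,−)}, r^{(j,+)} ≥ 0 with ±(Ã_j(Λ) + B̃_j) + Σₙ rₙ^{(j,∓)}Hₙ^{(j)} + β̃ e_{d+1}e_{d+1}ᵀ ⪰ 0), then Λ satisfies the original dual constraint: for all w with ‖w‖₂ ≤ 1, |Σₙ₌₁ᴺ(‖w‖₂²ψ''(xₙᵀw) − λₙᵀwψ'(xₙᵀw))| ≤ β̃, where ψ(z) = (z₊)² with the convention ψ''(0) = 0. -/

import Mathlib

open Matrix

section helpers

variable {N d : ℕ}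

lemma sum_mulVec' {ι : Type*} [DecidableEq ι] (s : Finset ι)
    (M : ι → Matrix (Fin d ⊕ Unit) (Fin d ⊕ Unit) ℝ)
    (v : Fin d ⊕ Unit → ℝ) : (∑ n ∈ s, M n) *ᵥ v = ∑ n ∈ s, (M n *ᵥ v) := by
  induction s using Finset.induction with
  | empty => ext a; simp [Matrix.mulVec, dotProduct]
  | insert a s h ih => simp [Finset.sum_insert h, Matrix.add_mulVec, ih]

lemma dotProduct_sum' {ι : Type*} [DecidableEq ι] (s : Finset ι)
    (v : Fin d ⊕ Unit → ℝ) (f : ι → (Fin d ⊕ Unit → ℝ)) :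
    v ⬝ᵥ (∑ n ∈ s, f n) = ∑ n ∈ s, v ⬝ᵥ f n := by
  induction s using Finset.induction with
  | empty => simp
  | insert a s h ih => simp [Finset.sum_insert h, dotProduct_add, ih]

lemma quadA (C : Matrix (Fin d) (Fin d) ℝ) (w : Fin d → ℝ) :
    Sum.elim w (fun _ => (1:ℝ)) ⬝ᵥ
      ((Matrix.fromBlocks C 0 0 0 : Matrix (Fin d ⊕ Unit) (Fin d ⊕ Unit) ℝ) *ᵥ
        Sum.elim w (fun _ => 1)) = w ⬝ᵥ (C *ᵥ w) := by
  simp [Matrix.fromBlocks_mulVec, dotProduct, Fintype.sum_sum_type]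

lemma quadH0 (w : Fin d → ℝ) :
    Sum.elim w (fun _ => (1:ℝ)) ⬝ᵥ
      ((Matrix.fromBlocks 1 0 0 (-1) : Matrix (Fin d ⊕ Unit) (Fin d ⊕ Unit) ℝ) *ᵥ
        Sum.elim w (fun _ => 1)) = w ⬝ᵥ w - 1 := by
  simp [Matrix.fromBlocks_mulVec, Matrix.neg_mulVec, Matrix.one_mulVec, dotProduct,
    Fintype.sum_sum_type]
  rfl

lemma quadE (w : Fin d → ℝ) :
    Sum.elim w (fun _ => (1:ℝ)) ⬝ᵥ
      ((Matrix.fromBlocks 0 0 0 1 : Matrix (Fin d ⊕ Unit) (Fin d ⊕ Unit) ℝ) *ᵥ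
        Sum.elim w (fun _ => 1)) = 1 := by
  simp [Matrix.fromBlocks_mulVec, Matrix.one_mulVec, dotProduct, Fintype.sum_sum_type,
    Matrix.mulVec]

lemma quadH' (M : Matrix (Fin d ⊕ Unit) (Fin d ⊕ Unit) ℝ) (x : Fin d → ℝ) (cn : ℝ)
    (h1 : ∀ a u, M (Sum.inl a) (Sum.inr u) = cn * x a)
    (h2 : ∀ u b, M (Sum.inr u) (Sum.inl b) = cn * x b)
    (h3 : ∀ a b, M (Sum.inl a) (Sum.inl b) = 0)
    (h4 : ∀ u u', M (Sum.inr u) (Sum.inr u') = 0) (w : Fin d → ℝ) :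
    Sum.elim w (fun _ => (1:ℝ)) ⬝ᵥ (M *ᵥ Sum.elim w (fun _ => 1)) = 2 * (cn * (x ⬝ᵥ w)) := by
  simp only [Matrix.mulVec, dotProduct, Fintype.sum_sum_type, Sum.elim_inl, Sum.elim_inr,
    h1, h2, h3, h4, zero_mul, Finset.sum_const_zero, zero_add, mul_one, mul_zero, add_zero]
  simp only [Finset.univ_unique, Finset.sum_singleton, one_mul]
  simp only [dotProduct, Finset.mul_sum, two_mul, ← Finset.sum_add_distrib]
  exact Finset.sum_congr rfl fun k _ => by ring

lemma quadPQ (P Q : Matrix (Fin N) (Fin d) ℝ) (dvec : Fin N → ℝ) (w : Fin d → ℝ) :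
    w ⬝ᵥ ((Pᵀ * Matrix.diagonal dvec * Q) *ᵥ w) =
      ∑ n, dvec n * (P n ⬝ᵥ w) * (Q n ⬝ᵥ w) := by
  rw [← Matrix.mulVec_mulVec, ← Matrix.mulVec_mulVec, dotProduct_mulVec,
    Matrix.vecMul_transpose]
  simp only [dotProduct, Matrix.mulVec_diagonal]
  exact Finset.sum_congr rfl fun n _ => by
    simp [Matrix.mulVec, dotProduct]; ring

lemma expand' (C : Matrix (Fin d) (Fin d) ℝ) (r0 : ℝ) (r : Fin N → ℝ)
    (HH : Fin N → Matrix (Fin d ⊕ Unit) (Fin d ⊕ Unit) ℝ)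
    (x : Fin N → Fin d → ℝ) (cc : Fin N → ℝ)
    (h1 : ∀ n a u, HH n (Sum.inl a) (Sum.inr u) = cc n * x n a)
    (h2 : ∀ n u b, HH n (Sum.inr u) (Sum.inl b) = cc n * x n b)
    (h3 : ∀ n a b, HH n (Sum.inl a) (Sum.inl b) = 0)
    (h4 : ∀ n u u', HH n (Sum.inr u) (Sum.inr u') = 0)
    (w : Fin d → ℝ) (b : ℝ) :
    Sum.elim w (fun _ => (1:ℝ)) ⬝ᵥ
      ((Matrix.fromBlocks C 0 0 0 + r0 • Matrix.fromBlocks 1 0 0 (-1) +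
        (∑ n, r n • HH n) + b • Matrix.fromBlocks 0 0 0 1) *ᵥ Sum.elim w (fun _ => 1)) =
    w ⬝ᵥ (C *ᵥ w) + r0 * (w ⬝ᵥ w - 1) +
      (∑ n, r n * (2 * (cc n * (x n ⬝ᵥ w)))) + b := by
  rw [Matrix.add_mulVec, Matrix.add_mulVec, Matrix.add_mulVec, dotProduct_add,
    dotProduct_add, dotProduct_add, sum_mulVec', dotProduct_sum',
    Matrix.smul_mulVec, Matrix.smul_mulVec, dotProduct_smul,
    dotProduct_smul, quadA, quadH0, quadE]
  simp only [smul_eq_mul, mul_one]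
  congr 1
  congr 1
  refine Finset.sum_congr rfl fun n _ => ?_
  rw [Matrix.smul_mulVec, dotProduct_smul, smul_eq_mul,
    quadH' (HH n) (x n) (cc n) (h1 n) (h2 n) (h3 n) (h4 n)]

end helpers

theorem stmt17 (N d : ℕ) (X Λ : Matrix (Fin N) (Fin d) ℝ) (β' : ℝ)
    (hrelax :
      ∀ j : Fin N → Bool,
        let Dmat : Matrix (Fin N) (Fin N) ℝ :=
          Matrix.diagonal fun n => if j n then (1 : ℝ) else 0
        let Amat : Matrix (Fin d) (Fin d) ℝ := -(Λᵀ * Dmat * X) - Xᵀ * Dmat * Λ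
        let Bmat : Matrix (Fin d) (Fin d) ℝ :=
          (2 * Dmat.trace) • (1 : Matrix (Fin d) (Fin d) ℝ)
        let c : Fin N → ℝ := fun n => 1 - 2 * (if j n then (1 : ℝ) else 0)
        let H0 : Matrix (Fin d ⊕ Unit) (Fin d ⊕ Unit) ℝ := Matrix.fromBlocks 1 0 0 (-1)
        let H : Fin N → Matrix (Fin d ⊕ Unit) (Fin d ⊕ Unit) ℝ := fun n =>
          Matrix.of fun a b =>
            match a, b with
            | Sum.inl a, Sum.inr _ => c n * X n a
            | Sum.inr _, Sum.inl b => c n * X n b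
            | _, _ => 0
        let E : Matrix (Fin d ⊕ Unit) (Fin d ⊕ Unit) ℝ := Matrix.fromBlocks 0 0 0 1
        ∃ r0m : ℝ, ∃ rm : Fin N → ℝ, ∃ r0p : ℝ, ∃ rp : Fin N → ℝ,
          0 ≤ r0m ∧ (∀ n, 0 ≤ rm n) ∧ 0 ≤ r0p ∧ (∀ n, 0 ≤ rp n) ∧
          (Matrix.fromBlocks (Amat + Bmat) 0 0 0 + r0m • H0 + ∑ n, rm n • H n +
            β' • E).PosSemidef ∧
          (Matrix.fromBlocks (-(Amat + Bmat)) 0 0 0 + r0p • H0 + ∑ n, rp n • H n +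
            β' • E).PosSemidef) :
    ∀ w : Fin d → ℝ, (∑ k, w k ^ 2) ≤ 1 →
      |∑ n, ((∑ k, w k ^ 2) * (if 0 < X n ⬝ᵥ w then (2 : ℝ) else 0) -
        (Λ n ⬝ᵥ w) * (2 * max (X n ⬝ᵥ w) 0))| ≤ β' := by
  intro w hw
  obtain ⟨r0m, rm, r0p, rp, hr0m, hrm, hr0p, hrp, hM, hP⟩ :=
    hrelax (fun n => decide (0 < X n ⬝ᵥ w))
  have hwsq : w ⬝ᵥ w = ∑ k, w k ^ 2 := by simp [dotProduct, sq]
  set dvec : Fin N → ℝ := fun n => if decide (0 < X n ⬝ᵥ w) = true then (1:ℝ) else 0 with hdvec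
  set cf : Fin N → ℝ := fun n => 1 - 2 * (if decide (0 < X n ⬝ᵥ w) = true then (1:ℝ) else 0)
    with hcf
  set S : ℝ := ∑ n, ((∑ k, w k ^ 2) * (if 0 < X n ⬝ᵥ w then (2 : ℝ) else 0) -
        (Λ n ⬝ᵥ w) * (2 * max (X n ⬝ᵥ w) 0)) with hS
  set Amat : Matrix (Fin d) (Fin d) ℝ :=
    -(Λᵀ * Matrix.diagonal dvec * X) - Xᵀ * Matrix.diagonal dvec * Λ with hA
  set Bmat : Matrix (Fin d) (Fin d) ℝ :=
    (2 * (Matrix.diagonal dvec).trace) • (1 : Matrix (Fin d) (Fin d) ℝ) with hB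
  -- key identity
  have key : w ⬝ᵥ ((Amat + Bmat) *ᵥ w) = S := by
    have h1 : w ⬝ᵥ (Amat *ᵥ w) = ∑ n, -(2 * (dvec n * (Λ n ⬝ᵥ w) * (X n ⬝ᵥ w))) := by
      rw [hA, Matrix.sub_mulVec, dotProduct_sub, Matrix.neg_mulVec,
        dotProduct_neg, quadPQ, quadPQ]
      simp only [← Finset.sum_neg_distrib, ← Finset.sum_sub_distrib]
      exact Finset.sum_congr rfl fun n _ => by ring
    have h2 : w ⬝ᵥ (Bmat *ᵥ w) = ∑ n, 2 * dvec n * (∑ k, w k ^ 2) := by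
      rw [hB, Matrix.smul_mulVec, Matrix.one_mulVec, dotProduct_smul,
        Matrix.trace_diagonal, smul_eq_mul, hwsq, mul_assoc, Finset.sum_mul, Finset.mul_sum]
      exact Finset.sum_congr rfl fun n _ => by ring
    rw [Matrix.add_mulVec, dotProduct_add, h1, h2, hS, ← Finset.sum_add_distrib]
    refine Finset.sum_congr rfl fun n _ => ?_
    by_cases h : 0 < X n ⬝ᵥ w
    · simp only [hdvec, decide_eq_true_eq, max_eq_left (le_of_lt h)]
      rw [if_pos h, if_pos h]
      ring
    · have hle : X n ⬝ᵥ w ≤ 0 := le_of_not_gt h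
      simp only [hdvec, decide_eq_true_eq, max_eq_right hle]
      rw [if_neg h, if_neg h]
      ring
  -- nonpositivity of the multiplier terms
  have hH0le : w ⬝ᵥ w - 1 ≤ 0 := by rw [hwsq]; linarith
  have hHle : ∀ n, 2 * (cf n * (X n ⬝ᵥ w)) ≤ 0 := by
    intro n
    by_cases h : 0 < X n ⬝ᵥ w
    · simp only [hcf, decide_eq_true_eq]; rw [if_pos h]; nlinarith
    · have := le_of_not_gt h
      simp only [hcf, decide_eq_true_eq]; rw [if_neg h]; nlinarith
  have hsum1 : (∑ n, rm n * (2 * (cf n * (X n ⬝ᵥ w)))) ≤ 0 :=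
    Finset.sum_nonpos fun n _ => mul_nonpos_of_nonneg_of_nonpos (hrm n) (hHle n)
  have hsum2 : (∑ n, rp n * (2 * (cf n * (X n ⬝ᵥ w)))) ≤ 0 :=
    Finset.sum_nonpos fun n _ => mul_nonpos_of_nonneg_of_nonpos (hrp n) (hHle n)
  have hr0m' : r0m * (w ⬝ᵥ w - 1) ≤ 0 := mul_nonpos_of_nonneg_of_nonpos hr0m hH0le
  have hr0p' : r0p * (w ⬝ᵥ w - 1) ≤ 0 := mul_nonpos_of_nonneg_of_nonpos hr0p hH0le
  -- the two quadratic form inequalities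
  have hq1 := hM.dotProduct_mulVec_nonneg (Sum.elim w (fun _ => 1))
  have hq2 := hP.dotProduct_mulVec_nonneg (Sum.elim w (fun _ => 1))
  simp only [star_trivial] at hq1 hq2
  rw [expand' (Amat + Bmat) r0m rm _ (fun n => X n) cf
    (fun n a u => rfl) (fun n u b => rfl) (fun n a b => rfl) (fun n u u' => rfl) w β'] at hq1
  rw [expand' (-(Amat + Bmat)) r0p rp _ (fun n => X n) cf
    (fun n a u => rfl) (fun n u b => rfl) (fun n a b => rfl) (fun n u u' => rfl) w β'] at hq2
  rw [key] at hq1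
  rw [Matrix.neg_mulVec, dotProduct_neg, key] at hq2
  rw [abs_le]
  constructor <;> linarith
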